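/- (Proposition 2, case 2a) Assume J₁₁ < 0 and J₁₂ > |J₁₁|, and set λ_M = J₁₁ + J₁₂ > 0. If 0 < β ≤ 2/λ_M, then the origin (0,0) is the unique critical point of f in (−1,1)², and it is a local maximum point of f. -/

import Mathlib

/-- The entropy function 𝓘(x) = ((1+x)log(1+x) + (1-x)log(1-x))/2.
Note `Real.log 0 = 0` in Mathlib, which implements the convention 0·log 0 = 0. -/
noncomputable def entI (x : ℝ) : ℝ :=
  ((1 + x) * Real.log (1 + x) + (1 - x) * Real.log (1 - x)) / 2

/-- Pressure functional of the symmetric zero-field bipartite mean-field model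
(α₁ = α₂ = 1/2, J₁₁ = J₂₂, h₁ = h₂ = 0). -/
noncomputable def fSym (β J11 J12 : ℝ) (μ : ℝ × ℝ) : ℝ :=
  β / 8 * (J11 * (μ.1 ^ 2 + μ.2 ^ 2) + 2 * J12 * μ.1 * μ.2) - (entI μ.1 + entI μ.2) / 2

/-- A critical point of f: a point of the open square (−1,1)² where both partial
derivatives of f vanish. -/
def IsCritPt (β J11 J12 : ℝ) (μ : ℝ × ℝ) : Prop :=
  μ.1 ∈ Set.Ioo (-1 : ℝ) 1 ∧ μ.2 ∈ Set.Ioo (-1 : ℝ) 1 ∧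
    deriv (fun x => fSym β J11 J12 (x, μ.2)) μ.1 = 0 ∧
    deriv (fun y => fSym β J11 J12 (μ.1, y)) μ.2 = 0

noncomputable def Lf (x : ℝ) : ℝ := (Real.log (1 + x) - Real.log (1 - x)) / 2

lemma hasDerivAt_entI {x : ℝ} (h1 : -1 < x) (h2 : x < 1) :
    HasDerivAt entI (Lf x) x := by
  have p1 : (0:ℝ) < 1 + x := by linarith
  have p2 : (0:ℝ) < 1 - x := by linarith
  have d1 : HasDerivAt (fun y : ℝ => 1 + y) 1 x := by
    simpa using (hasDerivAt_id x).const_add 1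
  have d2 : HasDerivAt (fun y : ℝ => 1 - y) (-1) x := by
    simpa using (hasDerivAt_id x).const_sub 1
  have l1 : HasDerivAt (fun y : ℝ => Real.log (1 + y)) (1 / (1 + x)) x := by
    simpa using d1.log p1.ne'
  have l2 : HasDerivAt (fun y : ℝ => Real.log (1 - y)) (-1 / (1 - x)) x := by
    simpa using d2.log p2.ne'
  have m1 : HasDerivAt (fun y : ℝ => (1 + y) * Real.log (1 + y))
      (1 * Real.log (1 + x) + (1 + x) * (1 / (1 + x))) x := d1.mul l1
  have m2 : HasDerivAt (fun y : ℝ => (1 - y) * Real.log (1 - y))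
      ((-1) * Real.log (1 - x) + (1 - x) * (-1 / (1 - x))) x := d2.mul l2
  have := (m1.add m2).div_const 2
  refine this.congr_deriv ?_
  unfold Lf
  field_simp
  ring

lemma Lf_strictMono {a b : ℝ} (ha : -1 < a) (hb : b < 1) (hab : a < b) : Lf a < Lf b := by
  have h1 : Real.log (1 + a) < Real.log (1 + b) := Real.log_lt_log (by linarith) (by linarith)
  have h2 : Real.log (1 - b) < Real.log (1 - a) := Real.log_lt_log (by linarith) (by linarith)
  unfold Lf; linarith

lemma Lf_odd (x : ℝ) : Lf (-x) = - Lf x := by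
  unfold Lf
  have e1 : 1 + -x = 1 - x := by ring
  have e2 : 1 - -x = 1 + x := by ring
  rw [e1, e2]; ring

lemma lt_Lf {x : ℝ} (h0 : 0 < x) (h1 : x < 1) : x < Lf x := by
  set h : ℝ → ℝ := fun a => (1 + a) * Real.exp (-2 * a) + a - 1 with hh
  have hd : ∀ a : ℝ, HasDerivAt h (1 - (1 + 2*a) * Real.exp (-2*a)) a := by
    intro a
    have e : HasDerivAt (fun y : ℝ => Real.exp (-2 * y)) (-2 * Real.exp (-2 * a)) a := by
      have := (Real.hasDerivAt_exp (-2*a)).comp a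
        ((hasDerivAt_id a).const_mul (-2))
      simpa [Function.comp_def, mul_comm] using this
    have d1 : HasDerivAt (fun y : ℝ => 1 + y) 1 a := by
      simpa using (hasDerivAt_id a).const_add 1
    have := ((d1.mul e).add (hasDerivAt_id a)).sub_const 1
    refine this.congr_deriv ?_
    ring
  have hmono : StrictMonoOn h (Set.Icc 0 1) := by
    apply strictMonoOn_of_deriv_pos (convex_Icc 0 1)
    · exact fun a _ => ((hd a).continuousAt).continuousWithinAt
    · intro a hain
      rw [interior_Icc] at hain
      rw [(hd a).deriv]
      have h2a : 1 + 2*a < Real.exp (2*a) := by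
        have := Real.add_one_lt_exp (x := 2*a) (by have := hain.1; positivity)
        linarith
      have hpos : (0:ℝ) < Real.exp (-2*a) := Real.exp_pos _
      have hlt : (1 + 2*a) * Real.exp (-2*a) < Real.exp (2*a) * Real.exp (-2*a) :=
        mul_lt_mul_of_pos_right h2a hpos
      rw [← Real.exp_add] at hlt
      simp at hlt
      have e : (-(2*a):ℝ) = -2*a := by ring
      rw [e] at hlt
      linarith
  have hx : h 0 < h x := hmono (by simp) (Set.mem_Icc.mpr ⟨h0.le, h1.le⟩) h0
  have hx0 : h 0 = 0 := by simp [hh]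
  rw [hx0] at hx
  have p1 : (0:ℝ) < 1 + x := by linarith
  have p2 : (0:ℝ) < 1 - x := by linarith
  have key : (1 - x) / (1 + x) < Real.exp (-2*x) := by
    rw [div_lt_iff₀ p1]
    have hgt : (1 + x) * Real.exp (-2*x) + x - 1 > 0 := hx
    nlinarith [Real.exp_pos (-2*x)]
  have hlog := Real.log_lt_log (by positivity) key
  rw [Real.log_exp, Real.log_div p2.ne' p1.ne'] at hlog
  unfold Lf; linarith

lemma le_Lf {x : ℝ} (h0 : 0 ≤ x) (h1 : x < 1) : x ≤ Lf x := by
  rcases eq_or_lt_of_le h0 with h | h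
  · simp [← h, Lf]
  · exact (lt_Lf h h1).le

lemma entI_ge {x : ℝ} (h1 : -1 < x) (h2 : x < 1) : x ^ 2 / 2 ≤ entI x := by
  set g : ℝ → ℝ := fun y => entI y - y ^ 2 / 2 with hg
  have hgd : ∀ y ∈ Set.Ioo (-1:ℝ) 1, HasDerivAt g (Lf y - y) y := by
    intro y hy
    have := (hasDerivAt_entI hy.1 hy.2).sub (((hasDerivAt_pow 2 y).div_const 2))
    exact this.congr_deriv (by norm_num)
  have hg0 : g 0 = 0 := by simp [hg, entI]
  have key : g 0 ≤ g x := by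
    rcases le_or_gt 0 x with hx0 | hx0
    · have hmono : MonotoneOn g (Set.Ico 0 1) := by
        apply monotoneOn_of_deriv_nonneg (convex_Ico 0 1)
        · intro y hy
          exact ((hgd y ⟨by linarith [hy.1], hy.2⟩).continuousAt).continuousWithinAt
        · intro y hy
          rw [interior_Ico] at hy
          exact ((hgd y ⟨by linarith [hy.1], hy.2⟩)).differentiableAt.differentiableWithinAt
        · intro y hy
          rw [interior_Ico] at hy
          rw [(hgd y ⟨by linarith [hy.1], hy.2⟩).deriv]
          have := le_Lf hy.1.le hy.2
          linarith
      exact hmono (by constructor <;> norm_num) ⟨hx0, h2⟩ hx0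
    · have hanti : AntitoneOn g (Set.Ioc (-1:ℝ) 0) := by
        apply antitoneOn_of_deriv_nonpos (convex_Ioc (-1) 0)
        · intro y hy
          exact ((hgd y ⟨hy.1, by linarith [hy.2]⟩).continuousAt).continuousWithinAt
        · intro y hy
          rw [interior_Ioc] at hy
          exact ((hgd y ⟨hy.1, by linarith [hy.2]⟩)).differentiableAt.differentiableWithinAt
        · intro y hy
          rw [interior_Ioc] at hy
          rw [(hgd y ⟨hy.1, by linarith [hy.2]⟩).deriv]
          have hny := le_Lf (by linarith [hy.2] : (0:ℝ) ≤ -y) (by linarith [hy.1])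
          rw [Lf_odd] at hny
          linarith
      exact hanti ⟨h1, hx0.le⟩ (by constructor <;> norm_num) hx0.le
  rw [hg0] at key
  simpa [hg] using key

lemma hasDerivAt_slice1 (β J11 J12 b : ℝ) {a : ℝ} (h1 : -1 < a) (h2 : a < 1) :
    HasDerivAt (fun x => fSym β J11 J12 (x, b))
      (β / 4 * (J11 * a + J12 * b) - Lf a / 2) a := by
  have hsq : HasDerivAt (fun x : ℝ => x ^ 2 + b ^ 2) (2 * a) a := by
    simpa using (hasDerivAt_pow 2 a).add_const (b ^ 2)
  have hlin : HasDerivAt (fun x : ℝ => 2 * J12 * x * b) (2 * J12 * b) a := by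
    have := ((hasDerivAt_id a).const_mul (2 * J12)).mul_const b
    simpa [mul_assoc, mul_comm, mul_left_comm] using this
  have hpoly : HasDerivAt (fun x : ℝ => β / 8 * (J11 * (x ^ 2 + b ^ 2) + 2 * J12 * x * b))
      (β / 8 * (J11 * (2 * a) + 2 * J12 * b)) a :=
    ((hsq.const_mul J11).add hlin).const_mul (β / 8)
  have hent : HasDerivAt (fun x : ℝ => (entI x + entI b) / 2) (Lf a / 2) a :=
    ((hasDerivAt_entI h1 h2).add_const (entI b)).div_const 2
  have := hpoly.sub hent
  refine this.congr_deriv ?_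
  ring

lemma hasDerivAt_slice2 (β J11 J12 a : ℝ) {b : ℝ} (h1 : -1 < b) (h2 : b < 1) :
    HasDerivAt (fun y => fSym β J11 J12 (a, y))
      (β / 4 * (J11 * b + J12 * a) - Lf b / 2) b := by
  have hsq : HasDerivAt (fun y : ℝ => a ^ 2 + y ^ 2) (2 * b) b := by
    simpa using ((hasDerivAt_pow 2 b)).const_add (a ^ 2)
  have hlin : HasDerivAt (fun y : ℝ => 2 * J12 * a * y) (2 * J12 * a) b := by
    simpa using (hasDerivAt_id b).const_mul (2 * J12 * a)
  have hpoly : HasDerivAt (fun y : ℝ => β / 8 * (J11 * (a ^ 2 + y ^ 2) + 2 * J12 * a * y))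
      (β / 8 * (J11 * (2 * b) + 2 * J12 * a)) b :=
    ((hsq.const_mul J11).add hlin).const_mul (β / 8)
  have hent : HasDerivAt (fun y : ℝ => (entI a + entI y) / 2) (Lf b / 2) b :=
    ((hasDerivAt_entI h1 h2).const_add (entI a)).div_const 2
  have := hpoly.sub hent
  refine this.congr_deriv ?_
  ring

/-- Proposition 2, case 2a: for J₁₁ < 0, J₁₂ > |J₁₁| (so λ_M = J₁₁ + J₁₂ > 0), if
0 < β ≤ 2/λ_M then the origin is the unique critical point of f and a local maximum
point. -/
theorem prop2_case2a (β J11 J12 : ℝ) (hJ11 : J11 < 0) (hJ12 : |J11| < J12)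
    (hβ0 : 0 < β) (hβ : β ≤ 2 / (J11 + J12)) :
    (∀ μ : ℝ × ℝ, IsCritPt β J11 J12 μ ↔ μ = (0, 0)) ∧
      IsLocalMax (fSym β J11 J12) (0, 0) := by
  obtain ⟨hJa, hJb⟩ := abs_lt.mp hJ12
  have hlam : 0 < J11 + J12 := by linarith
  have hJd : 0 < J12 - J11 := by linarith
  have hbl : β * (J11 + J12) ≤ 2 := by
    rw [le_div_iff₀ hlam] at hβ; exact hβ
  constructor
  · intro μ
    constructor
    · rintro ⟨hx, hy, hdx, hdy⟩
      obtain ⟨hx1, hx2⟩ := hx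
      obtain ⟨hy1, hy2⟩ := hy
      rw [(hasDerivAt_slice1 β J11 J12 μ.2 hx1 hx2).deriv] at hdx
      rw [(hasDerivAt_slice2 β J11 J12 μ.1 hy1 hy2).deriv] at hdy
      have e1 : Lf μ.1 = β / 2 * (J11 * μ.1 + J12 * μ.2) := by linarith
      have e2 : Lf μ.2 = β / 2 * (J11 * μ.2 + J12 * μ.1) := by linarith
      have heq : μ.1 = μ.2 := by
        by_contra hne
        have hdiff : Lf μ.1 - Lf μ.2 = β / 2 * ((J11 - J12) * (μ.1 - μ.2)) := by
          rw [e1, e2]; ring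
        rcases lt_or_gt_of_ne hne with h | h
        · have := Lf_strictMono hx1 hy2 h
          nlinarith [mul_pos (mul_pos hβ0 hJd) (show (0:ℝ) < μ.2 - μ.1 by linarith)]
        · have := Lf_strictMono hy1 hx2 h
          nlinarith [mul_pos (mul_pos hβ0 hJd) (show (0:ℝ) < μ.1 - μ.2 by linarith)]
      have hzero : μ.1 = 0 := by
        have e1' : Lf μ.1 = β * (J11 + J12) / 2 * μ.1 := by
          rw [e1, ← heq]; ring
        by_contra hne
        rcases lt_or_gt_of_ne hne with h | h
        · have hlt := lt_Lf (by linarith : (0:ℝ) < -μ.1) (by linarith)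
          rw [Lf_odd] at hlt
          nlinarith
        · have hlt := lt_Lf h hx2
          nlinarith
      have hzero2 : μ.2 = 0 := heq ▸ hzero
      exact Prod.ext hzero hzero2
    · rintro rfl
      refine ⟨by constructor <;> norm_num, by constructor <;> norm_num, ?_, ?_⟩
      · rw [(hasDerivAt_slice1 β J11 J12 (0:ℝ) (by norm_num) (by norm_num)).deriv]
        norm_num [Lf]
      · rw [(hasDerivAt_slice2 β J11 J12 (0:ℝ) (by norm_num) (by norm_num)).deriv]
        norm_num [Lf]
  · have hs : Set.Ioo (-1:ℝ) 1 ×ˢ Set.Ioo (-1:ℝ) 1 ∈ nhds ((0,0) : ℝ × ℝ) := by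
      apply (isOpen_Ioo.prod isOpen_Ioo).mem_nhds
      constructor <;> (constructor <;> norm_num)
    filter_upwards [hs] with μ hμ
    obtain ⟨⟨hx1, hx2⟩, ⟨hy1, hy2⟩⟩ := hμ
    have hex := entI_ge hx1 hx2
    have hey := entI_ge hy1 hy2
    have hzero : fSym β J11 J12 (0, 0) = 0 := by
      simp [fSym, entI]
    rw [hzero]
    show β / 8 * (J11 * (μ.1 ^ 2 + μ.2 ^ 2) + 2 * J12 * μ.1 * μ.2)
        - (entI μ.1 + entI μ.2) / 2 ≤ 0
    have h1 : 0 ≤ β * (J12 - J11) * (μ.1 - μ.2) ^ 2 :=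
      mul_nonneg (mul_pos hβ0 hJd).le (sq_nonneg _)
    have h2 : 0 ≤ (2 - β * (J11 + J12)) * (μ.1 + μ.2) ^ 2 :=
      mul_nonneg (by linarith) (sq_nonneg _)
    nlinarith [sq_nonneg (μ.1 - μ.2), sq_nonneg (μ.1 + μ.2)]
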